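/- Let (h, e, f) be an sl2-triple in a finite-dimensional complex semisimple Lie algebra 𝔤, let 𝔤ᵢ be the ad h-eigenspace of eigenvalue i, and let L ⊆ 𝔤₁ be a Lagrangian subspace for the symplectic form B(x, y) = κ(f, [x, y]) on 𝔤₁. Then the subspace u = L ⊕ (⊕_{i ≥ 2} 𝔤ᵢ) is a Lie subalgebra of 𝔤, and this Lie subalgebra is nilpotent. -/

import Mathlib

section Aux

variable {L : Type*} [LieRing L] [LieAlgebra ℂ L]

/-- The sum of `ad h`-eigenspaces with natural eigenvalue at least `a`. -/
private def NN (h : L) (a : ℕ) : Submodule ℂ L :=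
  ⨆ i : ℕ, ⨆ _ : a ≤ i, Module.End.eigenspace (LieAlgebra.ad ℂ L h) (i : ℂ)

private lemma lie_mem_eig (h : L) {μ ν : ℂ} {x y : L}
    (hx : x ∈ Module.End.eigenspace (LieAlgebra.ad ℂ L h) μ)
    (hy : y ∈ Module.End.eigenspace (LieAlgebra.ad ℂ L h) ν) :
    ⁅x, y⁆ ∈ Module.End.eigenspace (LieAlgebra.ad ℂ L h) (μ + ν) := by
  rw [Module.End.mem_eigenspace_iff, LieAlgebra.ad_apply] at hx hy ⊢
  rw [leibniz_lie, hx, hy, smul_lie, lie_smul, add_smul]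

private lemma eig_le_NN (h : L) {a i : ℕ} (hi : a ≤ i) :
    Module.End.eigenspace (LieAlgebra.ad ℂ L h) (i : ℂ) ≤ NN h a :=
  le_iSup_of_le i (le_iSup_of_le hi le_rfl)

private lemma NN_antitone (h : L) {a b : ℕ} (hab : a ≤ b) : NN h b ≤ NN h a :=
  iSup₂_le fun _ hi => eig_le_NN h (hab.trans hi)

private lemma lie_mem_NN (h : L) {a b : ℕ} {x y : L} (hx : x ∈ NN h a) (hy : y ∈ NN h b) :
    ⁅x, y⁆ ∈ NN h (a + b) := by
  rw [NN, iSup_subtype'] at hx hy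
  induction hx using Submodule.iSup_induction' with
  | mem i z hz =>
    induction hy using Submodule.iSup_induction' with
    | mem j w hw =>
      have := lie_mem_eig h hz hw
      rw [← Nat.cast_add] at this
      exact eig_le_NN h (Nat.add_le_add i.2 j.2) this
    | zero => simpa using Submodule.zero_mem _
    | add w₁ w₂ _ _ h1 h2 => simpa [lie_add] using Submodule.add_mem _ h1 h2
  | zero => simpa using Submodule.zero_mem _
  | add z₁ z₂ _ _ h1 h2 => simpa [add_lie] using Submodule.add_mem _ h1 h2

private lemma NN_eventually_bot (h : L) [Module.Finite ℂ L] : ∃ M : ℕ, NN h M = ⊥ := by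
  have hfin : {μ : ℂ | Module.End.eigenspace (LieAlgebra.ad ℂ L h) μ ≠ ⊥}.Finite := by
    have hne : minpoly ℂ (LieAlgebra.ad ℂ L h) ≠ 0 :=
      minpoly.ne_zero (Algebra.IsIntegral.isIntegral _)
    refine (Polynomial.finite_setOf_isRoot hne).subset ?_
    intro μ hμ
    exact Module.End.hasEigenvalue_iff_isRoot.mp hμ
  have hfin' : {i : ℕ | Module.End.eigenspace (LieAlgebra.ad ℂ L h) (i : ℂ) ≠ ⊥}.Finite :=
    Set.Finite.preimage (Set.injOn_of_injective Nat.cast_injective) hfin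
  obtain ⟨M, hM⟩ := hfin'.bddAbove
  refine ⟨M + 1, le_bot_iff.mp (iSup₂_le fun i hi => ?_)⟩
  rcases eq_or_ne (Module.End.eigenspace (LieAlgebra.ad ℂ L h) (i : ℂ)) ⊥ with hb | hb
  · exact hb ▸ le_rfl
  · exact absurd (hM hb) (by omega)

end Aux

/-- Let `(h, e, f)` be an `sl₂`-triple in a finite-dimensional complex semisimple Lie algebra
`𝔤`, let `𝔤ᵢ` be the `ad h`-eigenspace of eigenvalue `i`, and let `Lag ⊆ 𝔤₁` be a Lagrangian
subspace for the symplectic form `B(x, y) = κ(f, ⁅x, y⁆)` on `𝔤₁`.  Then the subspace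
`u = Lag ⊕ (⊕_{i ≥ 2} 𝔤ᵢ)` is a Lie subalgebra of `𝔤`, and this Lie subalgebra is nilpotent. -/
theorem lagrangian_sup_higher_weight_spaces_is_nilpotent_subalgebra
    (L : Type*) [LieRing L] [LieAlgebra ℂ L] [Module.Finite ℂ L]
    [LieAlgebra.IsSemisimple ℂ L]
    (h e f : L) (ht : IsSl2Triple h e f)
    (Lag : Submodule ℂ L)
    (hLag_le : Lag ≤ Module.End.eigenspace (LieAlgebra.ad ℂ L h) (1 : ℂ))
    (hLag : ∀ x ∈ Module.End.eigenspace (LieAlgebra.ad ℂ L h) (1 : ℂ),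
      (x ∈ Lag ↔ ∀ y ∈ Lag, killingForm ℂ L f ⁅x, y⁆ = 0))
    (u : Submodule ℂ L)
    (hu : u = Lag ⊔ ⨆ i : ℕ, ⨆ _ : 2 ≤ i,
      Module.End.eigenspace (LieAlgebra.ad ℂ L h) (i : ℂ)) :
    ∃ K : LieSubalgebra ℂ L, K.toSubmodule = u ∧ LieRing.IsNilpotent K := by
  have hN2 : (⨆ i : ℕ, ⨆ _ : 2 ≤ i,
      Module.End.eigenspace (LieAlgebra.ad ℂ L h) (i : ℂ)) = NN h 2 := rfl
  have huN1 : u ≤ NN h 1 := by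
    rw [hu, hN2]
    refine sup_le (hLag_le.trans ?_) (NN_antitone h one_le_two)
    simpa using eig_le_NN h (le_refl 1)
  have hclosed : ∀ {x y : L}, x ∈ u → y ∈ u → ⁅x, y⁆ ∈ u := by
    intro x y hx hy
    have h11 : ⁅x, y⁆ ∈ NN h (1 + 1) := lie_mem_NN h (a := 1) (b := 1) (huN1 hx) (huN1 hy)
    have h2 : (1 + 1 : ℕ) = 2 := rfl
    rw [h2] at h11
    have : ⁅x, y⁆ ∈ NN h 2 := h11
    rw [hu]
    exact le_sup_right (α := Submodule ℂ L) (hN2 ▸ this)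
  let K : LieSubalgebra ℂ L := { toSubmodule := u, lie_mem' := fun hx hy => hclosed hx hy }
  refine ⟨K, rfl, ?_⟩
  rw [LieAlgebra.isNilpotent_iff_forall (R := ℂ)]
  intro x
  obtain ⟨M, hM⟩ := NN_eventually_bot h
  refine ⟨M, ?_⟩
  ext y
  have key : ∀ m : ℕ, ∀ z : K,
      (((LieAlgebra.ad ℂ K x) ^ m) z : L) = ((LieAlgebra.ad ℂ L (x : L)) ^ m) (z : L) := by
    intro m
    induction m with
    | zero => intro z; rfl
    | succ n ih =>
      intro z
      rw [pow_succ, pow_succ, Module.End.mul_apply, Module.End.mul_apply, ih]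
      simp [LieAlgebra.ad_apply]
  have pow_mem : ∀ m : ℕ, ∀ z : K, ((LieAlgebra.ad ℂ L (x : L)) ^ m) (z : L) ∈ NN h (1 + m) := by
    intro m
    induction m with
    | zero => intro z; simpa using huN1 z.2
    | succ n ih =>
      intro z
      rw [pow_succ', Module.End.mul_apply, LieAlgebra.ad_apply]
      have he : 1 + (n + 1) = 1 + (1 + n) := by omega
      rw [he]
      exact lie_mem_NN h (a := 1) (b := 1 + n) (huN1 x.2) (ih z)
  have : (((LieAlgebra.ad ℂ K x) ^ M) y : L) = 0 := by
    rw [key]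
    have h1 : ((LieAlgebra.ad ℂ L (x : L)) ^ M) (y : L) ∈ NN h M :=
      NN_antitone h (Nat.le_add_left M 1) (pow_mem M y)
    rw [hM] at h1
    simpa using h1
  simpa using Subtype.ext this
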